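/- Let q ≥ 4 be a real number, κ := 1/(√q − 1), and for ρ > 0 let B₁(ρ) := ((q+1)/q)·q^κ · inf{ r^{−ρ/2}·(1+r)·(1+√(qr))^{4κ} : 0 < r ≤ q^{−1/2} }. Let ρ₁ > 0 be the unique positive real with B₁(ρ₁) = q^{ρ₁}·(q+1)/(q−1). Then ρ₁ > 2q/(q²−1). -/

import Mathlib

set_option maxHeartbeats 1000000

/-- The individual-code threshold `ρ₁(q)` of Theorem 2 exceeds the average-code
threshold `2q/(q²−1)` of Theorem 1: if `ρ₁ > 0` satisfies
`B₁(ρ₁) = q^{ρ₁}·(q+1)/(q−1)`, then `ρ₁ > 2q/(q²−1)`. -/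
theorem stmt_15 (q : ℝ) (hq : 4 ≤ q) (κ : ℝ) (hκ : κ = 1 / (Real.sqrt q - 1))
    (B₁ : ℝ → ℝ)
    (hB₁ : ∀ ρ : ℝ, B₁ ρ = (q + 1) / q * q ^ κ *
      sInf ((fun r : ℝ =>
          r ^ (-ρ / 2) * (1 + r) * (1 + Real.sqrt (q * r)) ^ (4 * κ)) ''
        Set.Ioc 0 (q ^ (-(1 : ℝ) / 2))))
    (ρ₁ : ℝ) (hρ₁pos : 0 < ρ₁)
    (hρ₁ : B₁ ρ₁ = q ^ ρ₁ * (q + 1) / (q - 1)) :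
    2 * q / (q ^ 2 - 1) < ρ₁ := by
  have hq0 : (0:ℝ) < q := by linarith
  set s := Real.sqrt q with hs
  have hs2 : s ^ 2 = q := Real.sq_sqrt hq0.le
  have hs_ge : 2 ≤ s := by
    have h4 : Real.sqrt 4 ≤ s := Real.sqrt_le_sqrt hq
    have : Real.sqrt 4 = 2 := by
      rw [show (4:ℝ) = 2 ^ 2 by norm_num, Real.sqrt_sq (by norm_num : (0:ℝ) ≤ 2)]
    linarith
  have hκpos : 0 < κ := by rw [hκ]; exact div_pos one_pos (by linarith)
  have hL : 1 < Real.log q := by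
    rw [← Real.exp_lt_exp, Real.exp_log hq0]
    have := Real.exp_one_lt_d9
    linarith
  -- lower bound on each element of the image
  have hmem : ∀ x ∈ ((fun r : ℝ =>
          r ^ (-ρ₁ / 2) * (1 + r) * (1 + Real.sqrt (q * r)) ^ (4 * κ)) ''
        Set.Ioc 0 (q ^ (-(1 : ℝ) / 2))), q ^ (ρ₁ / 4) ≤ x := by
    rintro x ⟨r, ⟨hr0, hr1⟩, rfl⟩
    have hA : q ^ (ρ₁ / 4) ≤ r ^ (-ρ₁ / 2) := by
      have h1 : (q ^ (-(1:ℝ)/2) : ℝ) ^ (-ρ₁ / 2) ≤ r ^ (-ρ₁ / 2) :=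
        Real.rpow_le_rpow_of_nonpos hr0 hr1 (by linarith)
      have h2 : (q ^ (-(1:ℝ)/2) : ℝ) ^ (-ρ₁ / 2) = q ^ (ρ₁ / 4) := by
        rw [← Real.rpow_mul hq0.le]; congr 1; ring
      rw [← h2]; exact h1
    have hB : (1:ℝ) ≤ 1 + r := by linarith
    have hC : (1:ℝ) ≤ (1 + Real.sqrt (q * r)) ^ (4 * κ) :=
      Real.one_le_rpow (by have := Real.sqrt_nonneg (q*r); linarith) (by positivity)
    have hApos : (0:ℝ) < q ^ (ρ₁ / 4) := Real.rpow_pos_of_pos hq0 _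
    calc q ^ (ρ₁ / 4) = q ^ (ρ₁ / 4) * 1 * 1 := by ring
      _ ≤ r ^ (-ρ₁ / 2) * (1 + r) * (1 + Real.sqrt (q * r)) ^ (4 * κ) := by
          apply mul_le_mul _ hC (by norm_num) (by positivity)
          exact mul_le_mul hA hB (by norm_num) (by positivity)
  have hne : ((fun r : ℝ =>
          r ^ (-ρ₁ / 2) * (1 + r) * (1 + Real.sqrt (q * r)) ^ (4 * κ)) ''
        Set.Ioc 0 (q ^ (-(1 : ℝ) / 2))).Nonempty := by
    refine ⟨_, ⟨q ^ (-(1:ℝ)/2), ⟨Real.rpow_pos_of_pos hq0 _, le_refl _⟩, rfl⟩⟩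
  have hinf : q ^ (ρ₁ / 4) ≤ sInf ((fun r : ℝ =>
          r ^ (-ρ₁ / 2) * (1 + r) * (1 + Real.sqrt (q * r)) ^ (4 * κ)) ''
        Set.Ioc 0 (q ^ (-(1 : ℝ) / 2))) := le_csInf hne hmem
  -- main inequality from the equation
  have hmain : (q + 1) / q * q ^ κ * q ^ (ρ₁ / 4) ≤ q ^ ρ₁ * (q + 1) / (q - 1) := by
    rw [← hρ₁, hB₁ ρ₁]
    refine mul_le_mul_of_nonneg_left hinf (by positivity)
  -- simplify to power inequality
  have hpow : (q - 1) * q ^ (κ + ρ₁ / 4) ≤ q * q ^ ρ₁ := by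
    have hq1 : (0:ℝ) < q - 1 := by linarith
    have h1 : ((q+1) * (q ^ κ * q ^ (ρ₁/4))) / q ≤ (q ^ ρ₁ * (q+1)) / (q-1) := by
      calc ((q+1) * (q ^ κ * q ^ (ρ₁/4))) / q
          = (q + 1) / q * q ^ κ * q ^ (ρ₁ / 4) := by ring
        _ ≤ q ^ ρ₁ * (q + 1) / (q - 1) := hmain
        _ = (q ^ ρ₁ * (q+1)) / (q-1) := by ring
    have h2 := (div_le_div_iff₀ hq0 hq1).mp h1
    rw [Real.rpow_add hq0]
    nlinarith [h2]
  have hq1 : (0:ℝ) < q - 1 := by linarith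
  have hs1 : (0:ℝ) < s - 1 := by linarith
  have hlogq : Real.log ((q-1) * q ^ (κ + ρ₁/4)) ≤ Real.log (q * q ^ ρ₁) :=
    Real.log_le_log (by positivity) hpow
  rw [Real.log_mul hq1.ne' (by positivity), Real.log_mul hq0.ne' (by positivity),
      Real.log_rpow hq0, Real.log_rpow hq0] at hlogq
  have hlb : Real.log q - Real.log (q-1) ≤ 1/(q-1) := by
    rw [← Real.log_div hq0.ne' hq1.ne']
    have h := Real.log_le_sub_one_of_pos (show (0:ℝ) < q/(q-1) by positivity)
    have he : q/(q-1) - 1 = 1/(q-1) := by field_simp; ring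
    linarith
  have hlow : κ*Real.log q - 1/(q-1) ≤ 3/4*ρ₁*Real.log q := by linarith
  -- key numeric inequality
  have hc2 : (q+1) < ((s+1)*(q+1) - 3/2*q) * Real.log q := by
    nlinarith [mul_pos (show (0:ℝ) < (s+1)*(q+1) - 3/2*q by nlinarith)
      (show (0:ℝ) < Real.log q - 1 by linarith)]
  have hn1 : s - 1 ≠ 0 := hs1.ne'
  have hn2 : s^2 - 1 ≠ 0 := by nlinarith
  have hn3 : (s^2)^2 - 1 ≠ 0 := by nlinarith
  have hident : κ*Real.log q - 1/(q-1) - 3/4*(2*q/(q^2-1))*Real.log q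
      = (((s+1)*(q+1) - 3/2*q)*Real.log q - (q+1)) / ((q-1)*(q+1)) := by
    rw [hκ, ← hs2]
    have hn4 : s^2 + 1 ≠ 0 := by positivity
    have : (s^2)^2 - 1 = (s^2-1)*(s^2+1) := by ring
    rw [this]
    field_simp
    ring
  have hkey : 3/4*(2*q/(q^2-1))*Real.log q < κ*Real.log q - 1/(q-1) := by
    have hpos : (0:ℝ) < (((s+1)*(q+1) - 3/2*q)*Real.log q - (q+1)) / ((q-1)*(q+1)) :=
      div_pos (by linarith) (mul_pos hq1 (by linarith))
    have h := hpos
    rw [← hident] at h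
    linarith
  have hLpos : (0:ℝ) < Real.log q := by linarith
  clear hB₁ hρ₁ hmem hne hinf hmain hpow hident hlogq
  have h5 : 2*q/(q^2-1) * Real.log q < ρ₁ * Real.log q := by linarith
  exact lt_of_mul_lt_mul_right h5 hLpos.le
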